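/- Assume Phi satisfies the Restricted Isometry Condition with parameters (2n, eps) with eps <= 0.1. Let v0 be an n-sparse vector supported on a set S, u0 = Phi^* Phi v0, and u in R^d with ||(u0 - u)|_T||_2 <= 2.4*eps*||v0||_2 + (1+eps)*||e||_2 for all sets T of size at most n. If J is a set of at most n indices maximizing ||u|_J||_2 among sets of that size intersected with supp(u) (in particular ||u|_J||_2 >= ||u|_S||_2), then ||u|_J||_2 >= (1 - 4.43*eps)*||v0||_2 - (1+eps)*||e||_2. -/
import Mathlib

open scoped BigOperators Matrix

noncomputable def l2 {d : ℕ} (v : Fin d → ℝ) : ℝ := Real.sqrt (∑ i, (v i)^2)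

noncomputable def l1 {d : ℕ} (v : Fin d → ℝ) : ℝ := ∑ i, |v i|

noncomputable def linf {d : ℕ} (v : Fin d → ℝ) : ℝ := ⨆ i, |v i|

noncomputable def restrict {d : ℕ} (v : Fin d → ℝ) (T : Finset (Fin d)) : Fin d → ℝ :=
  fun i => if i ∈ T then v i else 0

open Classical in
noncomputable def spt {d : ℕ} (v : Fin d → ℝ) : Finset (Fin d) :=
  Finset.univ.filter (fun i => v i ≠ 0)

def RIC {N d : ℕ} (Φ : Matrix (Fin N) (Fin d) ℝ) (m : ℕ) (ε : ℝ) : Prop :=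
  ∀ z : Fin d → ℝ, (spt z).card ≤ m →
    (1 - ε) * l2 z ≤ l2 (Φ.mulVec z) ∧ l2 (Φ.mulVec z) ≤ (1 + ε) * l2 z

lemma l2_eq_norm {d : ℕ} (v : Fin d → ℝ) :
    l2 v = ‖(WithLp.equiv 2 (Fin d → ℝ)).symm v‖ := by
  rw [EuclideanSpace.norm_eq]
  simp [l2, sq_abs]

lemma l2_nonneg {d : ℕ} (v : Fin d → ℝ) : 0 ≤ l2 v := Real.sqrt_nonneg _

lemma l2_sub_le {d : ℕ} (a b : Fin d → ℝ) : l2 a - l2 b ≤ l2 (a - b) := by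
  simp only [l2_eq_norm, map_sub]
  exact norm_sub_norm_le _ _

lemma l2_sq {d : ℕ} (v : Fin d → ℝ) : (l2 v)^2 = ∑ i, (v i)^2 := by
  apply Real.sq_sqrt
  positivity

/-- Lemma 2.5 (Localizing the energy), in the form with explicit constants. -/
theorem stmt17 {N d : ℕ} (Φ : Matrix (Fin N) (Fin d) ℝ) (n : ℕ) (ε : ℝ)
    (hε : 0 < ε) (hε1 : ε ≤ 0.1) (hRIC : RIC Φ (2 * n) ε)
    (v₀ : Fin d → ℝ) (S : Finset (Fin d)) (hv₀S : spt v₀ ⊆ S) (hS : S.card ≤ n)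
    (e : Fin N → ℝ) (u u₀ : Fin d → ℝ)
    (hu₀ : u₀ = Φᵀ.mulVec (Φ.mulVec v₀))
    (happrox : ∀ T : Finset (Fin d), T.card ≤ n →
      l2 (restrict (u₀ - u) T) ≤ 2.4 * ε * l2 v₀ + (1 + ε) * l2 e)
    (J : Finset (Fin d)) (hJ : J.card ≤ n)
    (hJmax : l2 (restrict u S) ≤ l2 (restrict u J)) :
    l2 (restrict u J) ≥ (1 - 4.43 * ε) * l2 v₀ - (1 + ε) * l2 e := by
  have he : 0 ≤ l2 e := l2_nonneg e
  have hv : 0 ≤ l2 v₀ := l2_nonneg v₀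
  rcases eq_or_lt_of_le hv with hv0 | hv0
  · -- l2 v₀ = 0
    have : (1 - 4.43 * ε) * l2 v₀ - (1 + ε) * l2 e ≤ 0 := by nlinarith
    linarith [l2_nonneg (restrict u J)]
  set y := Φ.mulVec v₀ with hy
  -- zero outside S
  have hzero : ∀ i : Fin d, i ∉ S → v₀ i = 0 := by
    intro i hi
    by_contra h
    exact hi (hv₀S (by simp [spt, h]))
  -- inner product identity
  have hA : ∑ i, restrict u₀ S i * v₀ i = ∑ j, (y j)^2 := by
    have h1 : ∑ i, restrict u₀ S i * v₀ i = ∑ i, u₀ i * v₀ i := by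
      apply Finset.sum_congr rfl
      intro i _
      by_cases hi : i ∈ S
      · simp [restrict, hi]
      · simp [restrict, hi, hzero i hi]
    have h2 : ∑ i, u₀ i * v₀ i = u₀ ⬝ᵥ v₀ := rfl
    have h3 : u₀ ⬝ᵥ v₀ = y ⬝ᵥ y := by
      rw [hu₀, Matrix.mulVec_transpose, ← Matrix.dotProduct_mulVec, ← hy]
    rw [h1, h2, h3]
    simp [dotProduct, sq]
  -- Cauchy-Schwarz
  have hCS : (∑ i, restrict u₀ S i * v₀ i)^2 ≤ (l2 (restrict u₀ S))^2 * (l2 v₀)^2 := by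
    rw [l2_sq, l2_sq]
    exact Finset.sum_mul_sq_le_sq_mul_sq _ _ _
  -- RIC lower bound on y
  have hcard : (spt v₀).card ≤ 2 * n := le_trans (le_trans (Finset.card_le_card hv₀S) hS) (by omega)
  have hRIC1 := (hRIC v₀ hcard).1
  have hy2 : ((1 - ε) * l2 v₀)^2 ≤ ∑ j, (y j)^2 := by
    rw [← l2_sq]
    have h1e : 0 ≤ (1 - ε) * l2 v₀ := by nlinarith
    nlinarith [l2_nonneg y]
  -- combine: l2 (restrict u₀ S) ≥ (1-ε)^2 * l2 v₀
  have hrS : (1 - ε)^2 * l2 v₀ ≤ l2 (restrict u₀ S) := by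
    have hyn : 0 ≤ ∑ j, (y j)^2 := by positivity
    have hb : 0 ≤ l2 (restrict u₀ S) * l2 v₀ := mul_nonneg (l2_nonneg _) hv
    have hsq : (∑ j, (y j)^2)^2 ≤ (l2 (restrict u₀ S) * l2 v₀)^2 := by
      rw [← hA]; rw [mul_pow]; exact hCS
    have h5 : ∑ j, (y j)^2 ≤ l2 (restrict u₀ S) * l2 v₀ :=
      le_of_pow_le_pow_left₀ two_ne_zero hb hsq
    nlinarith [hy2]
  -- triangle inequality
  have hres : restrict u₀ S - restrict (u₀ - u) S = restrict u S := by
    funext i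
    by_cases hi : i ∈ S <;> simp [restrict, hi]
  have htri : l2 (restrict u₀ S) - l2 (restrict (u₀ - u) S) ≤ l2 (restrict u S) := by
    have := l2_sub_le (restrict u₀ S) (restrict (u₀ - u) S)
    rw [hres] at this
    linarith
  have happ := happrox S hS
  have hkey : (1 - 4.43*ε) * l2 v₀ ≤ ((1-ε)^2 - 2.4*ε) * l2 v₀ :=
    mul_le_mul_of_nonneg_right (by nlinarith) hv
  nlinarith [htri, hJmax, hrS, happ, hkey]
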